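/- For all real numbers a > 0 and b > 0, the integral from 0 to ∞ of (ln x)/(a^2 + b^2·x^2) dx equals (π/(2ab))·ln(a/b). -/

import Mathlib

open Real

lemma integrableOn_log_div_one_add_sq :
    MeasureTheory.IntegrableOn (fun x : ℝ => Real.log x / (1 + x ^ 2)) (Set.Ioi 0) := by
  have hmeas : MeasureTheory.AEStronglyMeasurable (fun x : ℝ => Real.log x / (1 + x ^ 2))
      (MeasureTheory.volume.restrict (Set.Ioi (0:ℝ))) := by
    apply Measurable.aestronglyMeasurable
    exact Real.measurable_log.div (measurable_const.add (measurable_id.pow_const 2))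
  have h1 : MeasureTheory.IntegrableOn (fun x : ℝ => Real.log x / (1 + x ^ 2))
      (Set.Ioc (0:ℝ) 1) := by
    have hg : MeasureTheory.IntegrableOn (fun x : ℝ => 2 * x ^ (-(1/2) : ℝ))
        (Set.Ioc (0:ℝ) 1) := by
      have := (intervalIntegral.intervalIntegrable_rpow' (a := 0) (b := 1)
        (r := -(1/2)) (by norm_num)).1
      exact this.const_mul 2
    refine MeasureTheory.Integrable.mono hg (hmeas.mono_set Set.Ioc_subset_Ioi_self) ?_
    filter_upwards [MeasureTheory.ae_restrict_mem measurableSet_Ioc] with x hx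
    obtain ⟨hx0, hx1⟩ := hx
    have hx2 : (0:ℝ) < 1 + x ^ 2 := by positivity
    have hlog : Real.log x ≤ 0 := Real.log_nonpos hx0.le hx1
    have hb : -Real.log x ≤ 2 * x ^ (-(1/2) : ℝ) := by
      have := Real.log_le_rpow_div (x := x⁻¹) (ε := 1/2) (by positivity) (by norm_num)
      rw [Real.log_inv] at this
      calc -Real.log x ≤ (x⁻¹) ^ ((1:ℝ)/2) / (1/2) := this
        _ = 2 * x ^ (-(1/2) : ℝ) := by
            rw [← Real.rpow_neg_one x, ← Real.rpow_mul hx0.le]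
            norm_num
            ring
    have hgpos : (0:ℝ) ≤ 2 * x ^ (-(1/2) : ℝ) := by positivity
    rw [Real.norm_eq_abs, Real.norm_eq_abs, abs_of_nonneg hgpos, abs_div,
      abs_of_pos hx2, abs_of_nonpos hlog]
    have h11 : (1:ℝ) ≤ 1 + x ^ 2 := by nlinarith
    calc -Real.log x / (1 + x ^ 2) ≤ -Real.log x / 1 := by
          apply div_le_div_of_nonneg_left (by linarith) one_pos h11
      _ = -Real.log x := by ring
      _ ≤ 2 * x ^ (-(1/2) : ℝ) := hb
  have h2 : MeasureTheory.IntegrableOn (fun x : ℝ => Real.log x / (1 + x ^ 2))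
      (Set.Ioi (1:ℝ)) := by
    have hg : MeasureTheory.IntegrableOn (fun x : ℝ => 2 * x ^ (-(3/2) : ℝ))
        (Set.Ioi (1:ℝ)) :=
      (integrableOn_Ioi_rpow_of_lt (by norm_num) one_pos).const_mul 2
    refine MeasureTheory.Integrable.mono hg (hmeas.mono_set (Set.Ioi_subset_Ioi zero_le_one)) ?_
    filter_upwards [MeasureTheory.ae_restrict_mem measurableSet_Ioi] with x hx
    rw [Set.mem_Ioi] at hx
    have hx0 : (0:ℝ) < x := lt_trans one_pos hx
    have hx2 : (0:ℝ) < 1 + x ^ 2 := by positivity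
    have hlog : 0 ≤ Real.log x := Real.log_nonneg hx.le
    have hb : Real.log x ≤ 2 * x ^ ((1/2) : ℝ) := by
      have := Real.log_le_rpow_div (x := x) (ε := 1/2) hx0.le (by norm_num)
      calc Real.log x ≤ x ^ ((1:ℝ)/2) / (1/2) := this
        _ = 2 * x ^ ((1/2) : ℝ) := by ring
    have hgpos : (0:ℝ) ≤ 2 * x ^ (-(3/2) : ℝ) := by positivity
    rw [Real.norm_eq_abs, Real.norm_eq_abs, abs_of_nonneg hgpos, abs_div,
      abs_of_pos hx2, abs_of_nonneg hlog]
    have hxsq : x ^ 2 ≤ 1 + x ^ 2 := by linarith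
    have hxsqpos : (0:ℝ) < x ^ 2 := by positivity
    calc Real.log x / (1 + x ^ 2) ≤ (2 * x ^ ((1/2):ℝ)) / (x ^ 2) := by
          apply div_le_div₀ (by positivity) hb hxsqpos hxsq
      _ = 2 * x ^ (-(3/2) : ℝ) := by
          rw [mul_div_assoc, ← Real.rpow_natCast x 2, ← Real.rpow_sub hx0]
          norm_num
  have hsplit : Set.Ioi (0:ℝ) = Set.Ioc (0:ℝ) 1 ∪ Set.Ioi 1 :=
    (Set.Ioc_union_Ioi_eq_Ioi zero_le_one).symm
  rw [hsplit]
  exact h1.union h2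

lemma integral_log_div_one_add_sq_Ioi :
    ∫ x in Set.Ioi (0:ℝ), Real.log x / (1 + x ^ 2) = 0 := by
  have h := MeasureTheory.integral_comp_rpow_Ioi
    (fun y : ℝ => Real.log y / (1 + y ^ 2)) (p := -1) (by norm_num)
  have heq : ∀ x ∈ Set.Ioi (0:ℝ),
      (|(-1:ℝ)| * x ^ ((-1:ℝ) - 1)) • (Real.log (x ^ (-1:ℝ)) / (1 + (x ^ (-1:ℝ)) ^ 2)) =
        -(Real.log x / (1 + x ^ 2)) := by
    intro x hx
    rw [Set.mem_Ioi] at hx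
    have hxne : x ≠ 0 := hx.ne'
    rw [Real.rpow_neg_one, Real.log_inv, abs_neg, abs_one, one_mul,
      show ((-1:ℝ) - 1) = (-2 : ℝ) by norm_num,
      show (-2 : ℝ) = -((2:ℕ):ℝ) by norm_num, Real.rpow_neg hx.le, Real.rpow_natCast]
    have h1 : (1 : ℝ) + (x⁻¹) ^ 2 = (1 + x ^ 2) / x ^ 2 := by
      field_simp
      ring
    rw [h1, smul_eq_mul]
    have hx2 : (0:ℝ) < 1 + x ^ 2 := by positivity
    field_simp
  rw [MeasureTheory.setIntegral_congr_fun measurableSet_Ioi heq,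
    MeasureTheory.integral_neg] at h
  linarith

/-- GR 4.231.8: for `a, b > 0`, `∫_0^∞ ln x / (a² + b² x²) dx = (π/(2ab)) ln(a/b)`. -/
theorem integral_log_div_quadratic (a b : ℝ) (ha : 0 < a) (hb : 0 < b) :
    ∫ x in Set.Ioi (0:ℝ), Real.log x / (a ^ 2 + b ^ 2 * x ^ 2) =
      Real.pi / (2 * a * b) * Real.log (a / b) := by
  have hba : 0 < b / a := div_pos hb ha
  have key := MeasureTheory.integral_comp_mul_left_Ioi
      (fun y : ℝ => Real.log (a / b * y) / (a ^ 2 * (1 + y ^ 2))) 0 hba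
  simp only [mul_zero] at key
  have hLHS : (∫ x in Set.Ioi (0:ℝ),
      Real.log (a / b * (b / a * x)) / (a ^ 2 * (1 + (b / a * x) ^ 2))) =
      ∫ x in Set.Ioi (0:ℝ), Real.log x / (a ^ 2 + b ^ 2 * x ^ 2) := by
    apply MeasureTheory.setIntegral_congr_fun measurableSet_Ioi
    intro x hx
    have h1 : a / b * (b / a * x) = x := by field_simp
    have h2 : a ^ 2 * (1 + (b / a * x) ^ 2) = a ^ 2 + b ^ 2 * x ^ 2 := by
      field_simp
    dsimp only
    rw [h1, h2]
  rw [hLHS] at key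
  have hRHS : (∫ y in Set.Ioi (0:ℝ), Real.log (a / b * y) / (a ^ 2 * (1 + y ^ 2))) =
      Real.log (a / b) / a ^ 2 * (Real.pi / 2) := by
    have hcongr : ∀ y ∈ Set.Ioi (0:ℝ),
        Real.log (a / b * y) / (a ^ 2 * (1 + y ^ 2)) =
        (Real.log (a / b) / a ^ 2) * (1 + y ^ 2)⁻¹
          + (a ^ 2)⁻¹ * (Real.log y / (1 + y ^ 2)) := by
      intro y hy
      rw [Set.mem_Ioi] at hy
      rw [Real.log_mul (div_pos ha hb).ne' hy.ne']
      have h2 : (0:ℝ) < 1 + y ^ 2 := by positivity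
      field_simp
    rw [MeasureTheory.setIntegral_congr_fun measurableSet_Ioi hcongr]
    have hi1 : MeasureTheory.IntegrableOn
        (fun y : ℝ => (Real.log (a / b) / a ^ 2) * (1 + y ^ 2)⁻¹) (Set.Ioi 0) :=
      (integrable_inv_one_add_sq.integrableOn).const_mul _
    have hi2 : MeasureTheory.IntegrableOn
        (fun y : ℝ => (a ^ 2)⁻¹ * (Real.log y / (1 + y ^ 2))) (Set.Ioi 0) :=
      integrableOn_log_div_one_add_sq.const_mul _
    rw [MeasureTheory.integral_add hi1 hi2, MeasureTheory.integral_const_mul,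
      MeasureTheory.integral_const_mul, integral_log_div_one_add_sq_Ioi,
      integral_Ioi_inv_one_add_sq]
    rw [Real.arctan_zero]
    ring
  rw [hRHS, smul_eq_mul] at key
  rw [key]
  field_simp
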